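/- Let A be a commutative ℚ-algebra with derivation d, let N ≥ 1 and k ≥ 1, and let z ∈ A[w,w⁻¹] have support contained in {−N, −N+1, …, 0, 1}. Set H_k := (z^k)₊ + (1/2)·(z^k)₀. Then the Lax–Poisson bracket {H_k, z} has support contained in {−N, …, 1}; i.e., the t_k-flows of the 2dToda hierarchy preserve the polynomial reduction of z. -/

import Mathlib

open LaurentPolynomial

/-- The derivation `d : A → A` extended coefficientwise to Laurent polynomials
(so that `d w = 0`). -/
noncomputable def dmap {A : Type*} [CommRing A] (d : A → A) (f : LaurentPolynomial A) :
    LaurentPolynomial A :=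
  f.coeff.sum fun n a => C (d a) * T n

/-- The formal derivative `∂_w` on Laurent polynomials. -/
noncomputable def wderiv {A : Type*} [CommRing A] (f : LaurentPolynomial A) :
    LaurentPolynomial A :=
  f.coeff.sum fun n a => C (n • a) * T (n - 1)

/-- The Lax–Poisson bracket `{f,g} = w·(∂_w f)·(d g) − w·(d f)·(∂_w g)`. -/
noncomputable def lax {A : Type*} [CommRing A] (d : A → A) (f g : LaurentPolynomial A) :
    LaurentPolynomial A :=
  T 1 * wderiv f * dmap d g - T 1 * dmap d f * wderiv g

/-- `f₊`, the strictly positive-degree part of a Laurent polynomial. -/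
noncomputable def posPart {A : Type*} [CommRing A] (f : LaurentPolynomial A) :
    LaurentPolynomial A :=
  f.coeff.sum fun n a => if 0 < n then C a * T n else 0

/-- `f₋`, the strictly negative-degree part of a Laurent polynomial. -/
noncomputable def negPart {A : Type*} [CommRing A] (f : LaurentPolynomial A) :
    LaurentPolynomial A :=
  f.coeff.sum fun n a => if n < 0 then C a * T n else 0

section Aux
variable {A : Type*} [CommRing A]

lemma dmap_def (d : A → A) (f : LaurentPolynomial A) :
    dmap d f = f.coeff.sum fun n a => AddMonoidAlgebra.single n (d a) := by
  unfold dmap; simp only [single_eq_C_mul_T]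

lemma wderiv_def (f : LaurentPolynomial A) :
    wderiv f = f.coeff.sum fun n a => AddMonoidAlgebra.single (n - 1) (n • a) := by
  unfold wderiv; simp only [single_eq_C_mul_T]

variable {d : A → A} (hd_add : ∀ a b : A, d (a + b) = d a + d b)
  (hd_mul : ∀ a b : A, d (a * b) = a * d b + d a * b)

include hd_add in
lemma d_zero : d 0 = 0 := by
  have := hd_add 0 0
  simpa using this.symm

include hd_add in
lemma dmap_single (n : ℤ) (a : A) :
    dmap d (AddMonoidAlgebra.single n a : LaurentPolynomial A) = AddMonoidAlgebra.single n (d a) := by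
  rw [dmap_def, AddMonoidAlgebra.coeff_single, Finsupp.sum_single_index]
  rw [d_zero hd_add, AddMonoidAlgebra.single_zero]

lemma wderiv_single (n : ℤ) (a : A) :
    wderiv (AddMonoidAlgebra.single n a : LaurentPolynomial A) = AddMonoidAlgebra.single (n - 1) (n • a) := by
  rw [wderiv_def, AddMonoidAlgebra.coeff_single, Finsupp.sum_single_index]
  rw [smul_zero, AddMonoidAlgebra.single_zero]

include hd_add in
lemma dmap_add (f g : LaurentPolynomial A) :
    dmap d (f + g) = dmap d f + dmap d g := by
  simp only [dmap_def, AddMonoidAlgebra.coeff_add]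
  apply Finsupp.sum_add_index'
  · intro n; rw [d_zero hd_add, AddMonoidAlgebra.single_zero]
  · intro n a b; rw [hd_add, AddMonoidAlgebra.single_add]

lemma wderiv_add (f g : LaurentPolynomial A) :
    wderiv (f + g) = wderiv f + wderiv g := by
  simp only [wderiv_def, AddMonoidAlgebra.coeff_add]
  apply Finsupp.sum_add_index'
  · intro n; rw [smul_zero, AddMonoidAlgebra.single_zero]
  · intro n a b; rw [smul_add, AddMonoidAlgebra.single_add]

lemma dmap_zero : dmap d (0 : LaurentPolynomial A) = 0 := by
  rw [dmap_def, AddMonoidAlgebra.coeff_zero, Finsupp.sum_zero_index]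

lemma wderiv_zero : wderiv (0 : LaurentPolynomial A) = 0 := by
  rw [wderiv_def, AddMonoidAlgebra.coeff_zero, Finsupp.sum_zero_index]

include hd_add hd_mul in
lemma dmap_mul (f g : LaurentPolynomial A) :
    dmap d (f * g) = f * dmap d g + dmap d f * g := by
  induction f using AddMonoidAlgebra.induction_linear with
  | zero => simp [dmap_zero]
  | add f₁ f₂ h1 h2 =>
      rw [add_mul, dmap_add hd_add, h1, h2, dmap_add hd_add, add_mul]; ring
  | single m a =>
      induction g using AddMonoidAlgebra.induction_linear with
      | zero => simp [dmap_zero]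
      | add g₁ g₂ h1 h2 =>
          rw [mul_add, dmap_add hd_add, h1, h2, dmap_add hd_add, mul_add]; ring
      | single n b =>
          rw [AddMonoidAlgebra.single_mul_single, dmap_single hd_add,
            dmap_single hd_add, dmap_single hd_add,
            AddMonoidAlgebra.single_mul_single, AddMonoidAlgebra.single_mul_single,
            hd_mul, AddMonoidAlgebra.single_add]

lemma wderiv_mul (f g : LaurentPolynomial A) :
    wderiv (f * g) = f * wderiv g + wderiv f * g := by
  induction f using AddMonoidAlgebra.induction_linear with
  | zero => simp [wderiv_zero]
  | add f₁ f₂ h1 h2 =>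
      rw [add_mul, wderiv_add, h1, h2, wderiv_add, add_mul]; ring
  | single m a =>
      induction g using AddMonoidAlgebra.induction_linear with
      | zero => simp [wderiv_zero]
      | add g₁ g₂ h1 h2 =>
          rw [mul_add, wderiv_add, h1, h2, wderiv_add, mul_add]; ring
      | single n b =>
          rw [AddMonoidAlgebra.single_mul_single, wderiv_single, wderiv_single,
            wderiv_single, AddMonoidAlgebra.single_mul_single,
            AddMonoidAlgebra.single_mul_single]
          have h1 : m + (n - 1) = m + n - 1 := by ring
          have h2 : m - 1 + n = m + n - 1 := by ring
          rw [h1, h2, ← AddMonoidAlgebra.single_add]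
          congr 1
          rw [mul_smul_comm, smul_mul_assoc, add_smul, add_comm]

include hd_add hd_mul in
lemma lax_mul_left (f g h : LaurentPolynomial A) :
    lax d (f * g) h = f * lax d g h + g * lax d f h := by
  unfold lax
  rw [dmap_mul hd_add hd_mul, wderiv_mul]
  ring

lemma lax_self (f : LaurentPolynomial A) : lax d f f = 0 := by
  unfold lax; ring

include hd_add in
lemma lax_add_left (f g h : LaurentPolynomial A) :
    lax d (f + g) h = lax d f h + lax d g h := by
  unfold lax
  rw [dmap_add hd_add, wderiv_add]
  ring

include hd_add hd_mul in
lemma lax_pow_self (k : ℕ) (z : LaurentPolynomial A) : lax d (z ^ k) z = 0 := by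
  induction k with
  | zero =>
      have h1 : (z ^ 0 : LaurentPolynomial A) = AddMonoidAlgebra.single 0 1 := by
        rw [pow_zero]; rfl
      unfold lax
      rw [h1, wderiv_single, dmap_single hd_add]
      have : d (1 : A) = 0 := by
        have := hd_mul 1 1
        simp at this
        exact this
      simp [this]
  | succ n ih =>
      rw [pow_succ, lax_mul_left hd_add hd_mul, ih, lax_self]
      simp

lemma support_dmap (f : LaurentPolynomial A) : (dmap d f).coeff.support ⊆ f.coeff.support := by
  rw [dmap_def]
  simp only [AddMonoidAlgebra.coeff_finsuppSum, AddMonoidAlgebra.coeff_single]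
  refine Finsupp.support_sum.trans ?_
  apply Finset.biUnion_subset.2
  intro n hn
  exact (Finsupp.support_single_subset).trans (by simpa using hn)

lemma support_wderiv (f : LaurentPolynomial A) :
    (wderiv f).coeff.support ⊆ f.coeff.support.image (· - 1) := by
  rw [wderiv_def]
  simp only [AddMonoidAlgebra.coeff_finsuppSum, AddMonoidAlgebra.coeff_single]
  refine Finsupp.support_sum.trans ?_
  apply Finset.biUnion_subset.2
  intro n hn
  refine (Finsupp.support_single_subset).trans ?_
  simp only [Finset.singleton_subset_iff, Finset.mem_image]
  exact ⟨n, hn, rfl⟩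

lemma support_lax {f g : LaurentPolynomial A} {a b c e : ℤ}
    (hf : f.coeff.support ⊆ Finset.Icc a b) (hg : g.coeff.support ⊆ Finset.Icc c e) :
    (lax d f g).coeff.support ⊆ Finset.Icc (a + c) (b + e) := by
  classical
  unfold lax
  intro n hn
  rw [AddMonoidAlgebra.coeff_sub] at hn
  have hn' := Finsupp.support_sub hn
  have hT : (T 1 : LaurentPolynomial A).coeff.support ⊆ {(1:ℤ)} :=
    Finsupp.support_single_subset
  simp only [Finset.mem_union] at hn'
  have key : ∀ u v w : ℤ, u ∈ (T 1 : LaurentPolynomial A).coeff.support →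
      (v ∈ (wderiv f).coeff.support ∧ w ∈ (dmap d g).coeff.support ∨
       v ∈ (dmap d f).coeff.support ∧ w ∈ (wderiv g).coeff.support) →
      n = u + v + w → n ∈ Finset.Icc (a + c) (b + e) := by
    intro u v w hu hvw hsum
    have hu1 : u = 1 := by simpa using hT hu
    rcases hvw with ⟨hv, hw⟩ | ⟨hv, hw⟩
    · obtain ⟨v', hv', rfl⟩ := Finset.mem_image.1 (support_wderiv f hv)
      have h1 := hf hv'
      have h2 := hg (support_dmap g hw)
      simp only [Finset.mem_Icc] at h1 h2 ⊢
      omega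
    · have h1 := hf (support_dmap f hv)
      obtain ⟨w', hw', rfl⟩ := Finset.mem_image.1 (support_wderiv g hw)
      have h2 := hg hw'
      simp only [Finset.mem_Icc] at h1 h2 ⊢
      omega
  rcases hn' with h | h
  · have := AddMonoidAlgebra.support_coeff_mul_subset _ _ h
    rw [Finset.mem_add] at this
    obtain ⟨x, hx, w, hw, rfl⟩ := this
    have := AddMonoidAlgebra.support_coeff_mul_subset _ _ hx
    rw [Finset.mem_add] at this
    obtain ⟨u, hu, v, hv, rfl⟩ := this
    exact key u v w hu (Or.inl ⟨hv, hw⟩) rfl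
  · have := AddMonoidAlgebra.support_coeff_mul_subset _ _ h
    rw [Finset.mem_add] at this
    obtain ⟨x, hx, w, hw, rfl⟩ := this
    have := AddMonoidAlgebra.support_coeff_mul_subset _ _ hx
    rw [Finset.mem_add] at this
    obtain ⟨u, hu, v, hv, rfl⟩ := this
    exact key u v w hu (Or.inr ⟨hv, hw⟩) rfl

end Aux

section Main
variable {A : Type*} [CommRing A]

lemma C_eq_single (c : A) : (C c : LaurentPolynomial A) = AddMonoidAlgebra.single 0 c := by
  rw [single_eq_C_mul_T, T_zero, mul_one]

lemma posPart_apply (f : LaurentPolynomial A) (n : ℤ) :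
    (_root_.posPart f).coeff n = if 0 < n then f.coeff n else 0 := by
  classical
  have hterm : ∀ (m : ℤ) (a : A), ((if 0 < m then C a * T m else 0 : LaurentPolynomial A)).coeff n
      = if m = n then (if 0 < n then a else 0) else 0 := by
    intro m a
    by_cases h : 0 < m
    · rw [if_pos h, ← single_eq_C_mul_T, AddMonoidAlgebra.coeff_single_apply]
      by_cases hmn : m = n
      · subst hmn; simp [h]
      · simp [hmn]
    · rw [if_neg h, AddMonoidAlgebra.coeff_zero, Finsupp.zero_apply]
      by_cases hmn : m = n
      · subst hmn; simp [h]
      · simp [hmn]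
  unfold _root_.posPart
  rw [AddMonoidAlgebra.coeff_finsuppSum, Finsupp.sum_apply]
  simp only [hterm]
  rw [Finsupp.sum_ite_eq']
  by_cases hn : n ∈ f.coeff.support
  · simp [hn]
  · rw [if_neg hn, Finsupp.notMem_support_iff.1 hn]
    simp

lemma support_pow {N : ℕ} {z : LaurentPolynomial A}
    (hz : z.coeff.support ⊆ Finset.Icc (-(N : ℤ)) 1) (k : ℕ) :
    (z ^ k).coeff.support ⊆ Finset.Icc (-(N : ℤ) * k) k := by
  classical
  induction k with
  | zero =>
      rw [pow_zero]
      have h1 : ((1 : LaurentPolynomial A)) = C (1 : A) * T 0 := by simp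
      rw [h1]
      refine (support_C_mul_T (1 : A) 0).trans ?_
      simp
  | succ m ih =>
      rw [pow_succ]
      refine (AddMonoidAlgebra.support_coeff_mul_subset _ _).trans ?_
      intro n hn
      rw [Finset.mem_add] at hn
      obtain ⟨u, hu, v, hv, rfl⟩ := hn
      have h1 := ih hu
      have h2 := hz hv
      simp only [Finset.mem_Icc] at h1 h2 ⊢
      push_cast
      constructor <;> nlinarith [h1.1, h1.2, h2.1, h2.2]
end Main

/-- the `t_k`-flows of the 2dToda hierarchy preserve the polynomial
reduction of `z`: if `z` has support in `{−N,…,1}` and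
`H_k = (z^k)₊ + (1/2)(z^k)₀` then `{H_k, z}` has support in `{−N,…,1}`. -/
theorem t_flow_preserves_poly_reduction {A : Type*} [CommRing A] [Algebra ℚ A]
    (d : A → A)
    (hd_add : ∀ a b : A, d (a + b) = d a + d b)
    (hd_mul : ∀ a b : A, d (a * b) = a * d b + d a * b)
    (N k : ℕ) (hN : 1 ≤ N) (hk : 1 ≤ k)
    (z : LaurentPolynomial A)
    (hz : z.coeff.support ⊆ Finset.Icc (-(N : ℤ)) 1)
    (Hk : LaurentPolynomial A)
    (hHk : Hk = posPart (z ^ k) + C ((1/2 : ℚ) • ((z ^ k).coeff (0 : ℤ)))) :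
    (lax d Hk z).coeff.support ⊆ Finset.Icc (-(N : ℤ)) 1 := by
  classical
  have hPsupp : (z ^ k).coeff.support ⊆ Finset.Icc (-(N : ℤ) * k) (k : ℤ) := support_pow hz k
  have hPout : ∀ n : ℤ, n ∉ Finset.Icc (-(N : ℤ) * k) (k : ℤ) → (z ^ k).coeff n = 0 := by
    intro n hn
    by_contra h
    exact hn (hPsupp (Finsupp.mem_support_iff.2 h))
  have hHsupp : Hk.coeff.support ⊆ Finset.Icc (0 : ℤ) (k : ℤ) := by
    intro n hn
    rw [Finsupp.mem_support_iff] at hn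
    by_contra hcon
    apply hn
    rw [hHk, AddMonoidAlgebra.coeff_add, Finsupp.add_apply, posPart_apply, C_eq_single,
      AddMonoidAlgebra.coeff_single_apply]
    simp only [Finset.mem_Icc, not_and_or, not_le] at hcon
    rcases hcon with h | h
    · rw [if_neg (by omega), if_neg (by omega)]; simp
    · rw [if_pos (by omega), if_neg (by omega),
        hPout n (by simp only [Finset.mem_Icc, not_and_or, not_le]; right; exact h)]
      simp
  have hQsupp : ((z ^ k) - Hk).coeff.support ⊆ Finset.Icc (-(N : ℤ) * k) (0 : ℤ) := by
    intro n hn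
    rw [Finsupp.mem_support_iff] at hn
    by_contra hcon
    apply hn
    rw [AddMonoidAlgebra.coeff_sub, Finsupp.sub_apply, hHk, AddMonoidAlgebra.coeff_add,
      Finsupp.add_apply, posPart_apply, C_eq_single, AddMonoidAlgebra.coeff_single_apply]
    simp only [Finset.mem_Icc, not_and_or, not_le] at hcon
    rcases hcon with h | h
    · have hprod : (0 : ℤ) ≤ (N : ℤ) * (k : ℤ) := by positivity
      have hn0 : n < 0 := by linarith
      rw [if_neg (not_lt.2 hn0.le), if_neg (by omega),
        hPout n (by simp only [Finset.mem_Icc, not_and_or, not_le]; left; exact h)]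
      simp
    · rw [if_pos (by omega), if_neg (by omega)]
      ring
  have hsum : lax d Hk z + lax d ((z ^ k) - Hk) z = 0 := by
    rw [← lax_add_left hd_add]
    have hPH : Hk + ((z ^ k) - Hk) = z ^ k := by ring
    rw [hPH, lax_pow_self hd_add hd_mul]
  have hneg : lax d Hk z = - lax d ((z ^ k) - Hk) z := eq_neg_of_add_eq_zero_left hsum
  intro n hn
  have h1 := support_lax hHsupp hz hn
  have h2 : n ∈ Finset.Icc ((-(N : ℤ) * k) + -(N : ℤ)) ((0 : ℤ) + 1) := by
    apply support_lax hQsupp hz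
    have hmem : n ∈ (- lax d ((z ^ k) - Hk) z).coeff.support := hneg ▸ hn
    rwa [AddMonoidAlgebra.coeff_neg, Finsupp.support_neg] at hmem
  rw [Finset.mem_Icc] at h1 h2 ⊢
  exact ⟨by linarith [h1.1], by linarith [h2.2]⟩
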